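/- Let r > 0 and let O, C be points in the Euclidean plane with dist O C = 2r. Then there exist points A and B such that dist C A = 2r, dist C B = 4r, dist A O = 2·√3·r, O lies strictly between A and B (O ∈ segment ℝ A B, O ≠ A, O ≠ B), and consequently dist A B / dist A O = φ and dist A O / dist O B = φ, where φ = (1+√5)/2. (Hence every vertex of a regular hexagonal tessellation, being at distance 2r from the center of each adjacent hexagon of circumradius 2r, is a Phi center: it is the golden-section division point of such a segment A B.) -/

import Mathlib

open RealInnerProductSpace

private lemma eq_of_sq_eq_sq' {x y : ℝ} (hx : 0 ≤ x) (hy : 0 ≤ y) (h : x ^ 2 = y ^ 2) :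
    x = y := by
  rw [← Real.sqrt_sq hx, h, Real.sqrt_sq hy]

private lemma norm_combo {E : Type*} [NormedAddCommGroup E] [InnerProductSpace ℝ E]
    {e v : E} (hee : ⟪e, e⟫ = 1) (hvv : ⟪v, v⟫ = 1) (hev : ⟪e, v⟫ = 0)
    (a b : ℝ) : ‖a • e + b • v‖ ^ 2 = a ^ 2 + b ^ 2 := by
  rw [← real_inner_self_eq_norm_sq, real_inner_add_add_self]
  simp only [real_inner_smul_left, real_inner_smul_right, hee, hvv, hev]
  ring

theorem hexagonal_tessellation_vertex_is_phi_center
    (r : ℝ) (hr : 0 < r)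
    (O C : EuclideanSpace ℝ (Fin 2))
    (hOC : dist O C = 2 * r) :
    ∃ A B : EuclideanSpace ℝ (Fin 2),
      dist C A = 2 * r ∧
      dist C B = 4 * r ∧
      dist A O = 2 * Real.sqrt 3 * r ∧
      O ∈ segment ℝ A B ∧ O ≠ A ∧ O ≠ B ∧
      dist A B / dist A O = (1 + Real.sqrt 5) / 2 ∧
      dist A O / dist O B = (1 + Real.sqrt 5) / 2 := by
  have h2r : (0:ℝ) < 2 * r := by linarith
  set s3 := Real.sqrt 3 with hs3_def
  set s5 := Real.sqrt 5 with hs5_def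
  have hs3 : s3 ^ 2 = 3 := Real.sq_sqrt (by norm_num)
  have hs5 : s5 ^ 2 = 5 := Real.sq_sqrt (by norm_num)
  have hs3pos : 0 < s3 := Real.sqrt_pos.mpr (by norm_num)
  have hs5pos : 0 < s5 := Real.sqrt_pos.mpr (by norm_num)
  have hs5gt1 : 1 < s5 := by nlinarith
  have hs5lt3 : s5 < 3 := by nlinarith
  -- the unit vector from C to O, made opaque
  obtain ⟨e, hOC', hnorm_e⟩ :
      ∃ e : EuclideanSpace ℝ (Fin 2), O - C = (2*r) • e ∧ ‖e‖ = 1 := by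
    refine ⟨(2*r)⁻¹ • (O - C), (smul_inv_smul₀ (ne_of_gt h2r) _).symm, ?_⟩
    rw [norm_smul, show ‖O - C‖ = 2 * r from by rw [← dist_eq_norm]; exact hOC,
      Real.norm_eq_abs, abs_of_pos (inv_pos.2 h2r)]
    field_simp
  have hee : ⟪e, e⟫ = 1 := by
    rw [real_inner_self_eq_norm_sq, hnorm_e]; norm_num
  -- a perpendicular unit vector
  obtain ⟨v, hvv, hev⟩ :
      ∃ v : EuclideanSpace ℝ (Fin 2), ⟪v, v⟫ = 1 ∧ ⟪e, v⟫ = 0 := by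
    refine ⟨!₂[-(e 1), e 0], ?_, ?_⟩
    · have h := hee
      rw [PiLp.inner_apply, Fin.sum_univ_two] at h ⊢
      simp only [RCLike.inner_apply, starRingEnd_apply, star_trivial] at h ⊢
      show -(e 1) * -(e 1) + e 0 * e 0 = 1
      nlinarith [h]
    · rw [PiLp.inner_apply, Fin.sum_univ_two]
      simp only [RCLike.inner_apply, starRingEnd_apply, star_trivial]
      show -(e 1) * e 0 + e 0 * e 1 = 0
      ring
  -- define A and B
  set A : EuclideanSpace ℝ (Fin 2) := C + ((-r) • e + (-(s3*r)) • v) with hA_def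
  set B : EuclideanSpace ℝ (Fin 2) :=
    C + (((1+3*s5)/2*r) • e + (s3*(s5-1)/2*r) • v) with hB_def
  have hO_eq : O = C + ((2*r) • e + (0:ℝ) • v) := by
    rw [zero_smul, add_zero, ← hOC']; abel
  -- distances
  have hdCA : dist C A = 2 * r := by
    rw [dist_eq_norm]
    have h1 : C - A = (r) • e + (s3*r) • v := by rw [hA_def]; module
    refine eq_of_sq_eq_sq' (norm_nonneg _) (by linarith) ?_
    rw [h1, norm_combo hee hvv hev]
    linear_combination (r^2) * hs3
  have hdCB : dist C B = 4 * r := by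
    rw [dist_eq_norm]
    have h1 : C - B = (-((1+3*s5)/2*r)) • e + (-(s3*(s5-1)/2*r)) • v := by
      rw [hB_def]; module
    refine eq_of_sq_eq_sq' (norm_nonneg _) (by linarith) ?_
    rw [h1, norm_combo hee hvv hev]
    linear_combination (r^2*(s5-1)^2/4) * hs3 + (3*r^2) * hs5
  have hdAO : dist A O = 2 * s3 * r := by
    rw [dist_eq_norm]
    have h1 : A - O = (-(3*r)) • e + (-(s3*r)) • v := by rw [hA_def, hO_eq]; module
    refine eq_of_sq_eq_sq' (norm_nonneg _) (by positivity) ?_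
    rw [h1, norm_combo hee hvv hev]
    linear_combination (-3*r^2) * hs3
  have hdOB : dist O B = s3 * (s5 - 1) * r := by
    rw [dist_eq_norm]
    have h1 : O - B = (-(3*(s5-1)/2*r)) • e + (-(s3*(s5-1)/2*r)) • v := by
      rw [hB_def, hO_eq]; module
    refine eq_of_sq_eq_sq' (norm_nonneg _)
      (mul_nonneg (mul_nonneg hs3pos.le (by linarith)) hr.le) ?_
    rw [h1, norm_combo hee hvv hev]
    linear_combination (-(3/4)*(s5-1)^2*r^2) * hs3
  have hdAB : dist A B = s3 * (s5 + 1) * r := by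
    rw [dist_eq_norm]
    have h1 : A - B = (-(3*(s5+1)/2*r)) • e + (-(s3*(s5+1)/2*r)) • v := by
      rw [hA_def, hB_def]; module
    refine eq_of_sq_eq_sq' (norm_nonneg _)
      (mul_nonneg (mul_nonneg hs3pos.le (by linarith)) hr.le) ?_
    rw [h1, norm_combo hee hvv hev]
    linear_combination (-(3/4)*(s5+1)^2*r^2) * hs3
  have hAOpos : 0 < dist A O := by rw [hdAO]; positivity
  have hOBpos : 0 < dist O B := by
    rw [hdOB]; exact mul_pos (mul_pos hs3pos (by linarith)) hr
  refine ⟨A, B, hdCA, hdCB, hdAO, ?_, ?_, ?_, ?_, ?_⟩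
  · -- segment membership
    refine ⟨(3 - s5)/2, (s5 - 1)/2, by linarith, by linarith, by ring, ?_⟩
    rw [hA_def, hB_def, hO_eq]
    match_scalars
    · ring
    · linear_combination (3*r/4) * hs5
    · linear_combination (s3*r/4) * hs5
  · intro h; rw [h] at hAOpos; simp at hAOpos
  · intro h; rw [h] at hOBpos; simp at hOBpos
  · rw [hdAB, hdAO]
    rw [div_eq_div_iff (by positivity) (by norm_num)]
    ring
  · rw [hdAO, hdOB]
    rw [div_eq_div_iff (ne_of_gt (mul_pos (mul_pos hs3pos (by linarith : (0:ℝ) < s5 - 1)) hr)) (by norm_num)]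
    linear_combination (-(s3*r)) * hs5
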